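/- The following Vandermonde mixed moment expansion coefficients for the uniform phase distribution hold: for ρ = {{1,3},{2,4}} (a partition of {1,…,4}), K_{ρ,u} = 2/3; for ρ = {{1,4},{2,5},{3,6}} (of {1,…,6}), K_{ρ,u} = 1/2; for ρ = {{1,4},{2,6},{3,5}} (of {1,…,6}), K_{ρ,u} = 1/2; for ρ = {{1,3,5},{2,4,6}} (of {1,…,6}), K_{ρ,u} = 11/20; for ρ = {{1,5},{3,7},{2,4,6}} (of {1,…,7}), K_{ρ,u} = 9/20; for ρ = {{1,6},{2,4},{3,5,7}} (of {1,…,7}), K_{ρ,u} = 9/20. -/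

import Mathlib

open MeasureTheory Filter Finset Matrix ProbabilityTheory
open scoped Classical Real

noncomputable section

/-- The `N × L` random Vandermonde matrix with phases `ω`:
entry `(k, l)` is `N^{-1/2} exp(-i k ω_l)`. -/
def vmat (N L : ℕ) (ω : Fin L → ℝ) : Matrix (Fin N) (Fin L) ℂ :=
  fun k l => (Real.sqrt N : ℂ)⁻¹ * Complex.exp (-Complex.I * ((k : ℕ) : ℂ) * ((ω l : ℝ) : ℂ))

/-- Normalized trace of an `m × m` complex matrix. -/
def ntr {m : ℕ} (A : Matrix (Fin m) (Fin m) ℂ) : ℂ := (m : ℂ)⁻¹ * A.trace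

/-- The joint law of `L` i.i.d. phases, each with law `μ`. -/
def phases (L : ℕ) (μ : Measure ℝ) [SigmaFinite μ] : Measure (Fin L → ℝ) :=
  Measure.pi fun _ => μ

/-- The uniform distribution on `[0, 2π)`. -/
def unif : Measure ℝ :=
  ((2 * Real.pi)⁻¹).toNNReal • (volume.restrict (Set.Ico 0 (2 * Real.pi)))

instance : IsProbabilityMeasure unif := by
  constructor
  have h : (0:ℝ) < 2 * Real.pi := by positivity
  simp only [unif, Measure.smul_apply, Measure.restrict_apply_univ, Real.volume_Ico, sub_zero,
    smul_eq_mul]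
  rw [ENNReal.smul_def, smul_eq_mul, ENNReal.ofReal, ← ENNReal.coe_mul,
    ← Real.toNNReal_mul (by positivity), inv_mul_cancel₀ (ne_of_gt h)]
  simp

/-- Partitions of `{1, …, n}` (represented as `Fin n`). -/
abbrev PartN (n : ℕ) := Finpartition (Finset.univ : Finset (Fin n))

/-- The block of `ρ` containing `k`. -/
def blkOf {n : ℕ} (ρ : PartN n) (k : Fin n) : Finset (Fin n) := ρ.part k

/-- The block of `ρ` containing `k`, as an element of `ρ.parts`. -/
def blkSub {n : ℕ} (ρ : PartN n) (k : Fin n) : {W // W ∈ ρ.parts} :=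
  ⟨ρ.part k, ρ.part_mem.2 (Finset.mem_univ k)⟩

/-- Cyclic predecessor on `Fin n`. -/
def cyc {n : ℕ} (k : Fin n) : Fin n := ⟨(k.val + n - 1) % n, Nat.mod_lt _ k.pos⟩

/-- Cyclic successor on `Fin n`. -/
def cycSucc {n : ℕ} (k : Fin n) : Fin n := ⟨(k.val + 1) % n, Nat.mod_lt _ k.pos⟩

/-- The Vandermonde mixed moment expansion coefficient `K_{ρ,ω,N}`, where `ω` has law `μ`:
`N^{|ρ|-n-1} Σ_{(i_1,…,i_n)} E[exp(i Σ_k i_k (ω_{b(k-1)} - ω_{b(k)}))]`, the `ω_W` being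
i.i.d. copies of `ω` indexed by the blocks of `ρ`. -/
def Kcoef (n : ℕ) (μ : Measure ℝ) [SigmaFinite μ] (ρ : PartN n) (N : ℕ) : ℂ :=
  (N : ℂ) ^ ((ρ.parts.card : ℤ) - (n : ℤ) - 1) *
    ∑ i : Fin n → Fin N,
      ∫ x : {W // W ∈ ρ.parts} → ℝ,
        Complex.exp (Complex.I * ∑ k : Fin n,
          ((i k : ℕ) : ℂ) * (((x (blkSub ρ (cyc k)) : ℝ) : ℂ) - ((x (blkSub ρ k) : ℝ) : ℂ)))
      ∂(Measure.pi fun _ => μ)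

/-- The mixed moment `E[tr_L(D_1 Vᴴ V D_2 Vᴴ V ⋯ D_n Vᴴ V)]`. -/
def mixedMoment (N L n : ℕ) (μ : Measure ℝ) [SigmaFinite μ]
    (D : Fin n → Matrix (Fin L) (Fin L) ℂ) : ℂ :=
  ∫ ω, ntr ((List.ofFn fun k : Fin n => D k * (vmat N L ω)ᴴ * vmat N L ω).prod) ∂(phases L μ)

/-- The moment `E[tr_L((D Vᴴ V)^n)]`. -/
def momExp (N L : ℕ) (μ : Measure ℝ) [SigmaFinite μ]
    (D : Matrix (Fin L) (Fin L) ℂ) (n : ℕ) : ℂ :=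
  ∫ ω, ntr ((D * (vmat N L ω)ᴴ * vmat N L ω) ^ n) ∂(phases L μ)

/-- `D_ρ = Π_{W block of ρ} lim tr_L (Π_{k ∈ W} D_k(N))`, expressed from the joint limit
distribution data `Dlim`. -/
def Dpart {n : ℕ} (Dlim : ∀ s : ℕ, (Fin s → Fin n) → ℂ) (ρ : PartN n) : ℂ :=
  ∏ W ∈ ρ.parts, Dlim W.card (fun j => ((W.orderIsoOfFin rfl j : Fin n)))

/-- `|S_{ρ,N}|`: the number of tuples `(i_1,…,i_n) ∈ {0,…,N-1}^n` with
`Σ_{k ∈ W} i_{k-1} = Σ_{k ∈ W} i_k` for every block `W` of `ρ` (cyclically). -/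
def Svol (n : ℕ) (ρ : PartN n) (N : ℕ) : ℕ :=
  Nat.card {i : Fin n → Fin N //
    ∀ W ∈ ρ.parts, ∑ k ∈ W, ((i (cyc k) : ℕ)) = ∑ k ∈ W, ((i k : ℕ))}

/-- A partition is noncrossing if there are no `i < j < k < l` with `i ∼ k` and `j ∼ l`
lying in two different blocks. -/
def IsNoncrossing {n : ℕ} (ρ : PartN n) : Prop :=
  ∀ i j k l : Fin n, i < j → j < k → k < l →
    blkOf ρ i = blkOf ρ k → blkOf ρ j = blkOf ρ l → blkOf ρ i = blkOf ρ j

/-- The complex Gaussian law on `ℂ` with total variance `σ^2`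
(independent real and imaginary parts, each `N(0, σ²/2)`). -/
def cgauss (σ : ℝ) : Measure ℂ :=
  Measure.map (fun p : ℝ × ℝ => ((p.1 : ℝ) : ℂ) + ((p.2 : ℝ) : ℂ) * Complex.I)
    ((gaussianReal 0 (σ ^ 2 / 2).toNNReal).prod (gaussianReal 0 (σ ^ 2 / 2).toNNReal))

/-- The law of an `m × k` array of i.i.d. complex Gaussian entries of variance `σ²`. -/
def gElem (m k : ℕ) (σ : ℝ) : Measure (Fin m → Fin k → ℂ) :=
  Measure.pi fun _ => Measure.pi fun _ => cgauss σ

instance (σ : ℝ) : IsProbabilityMeasure (cgauss σ) := by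
  unfold cgauss
  have : Measurable fun p : ℝ × ℝ => ((p.1 : ℝ) : ℂ) + ((p.2 : ℝ) : ℂ) * Complex.I := by
    fun_prop
  exact Measure.isProbabilityMeasure_map this.aemeasurable

instance (m k : ℕ) (σ : ℝ) : IsProbabilityMeasure (gElem m k σ) := by
  unfold gElem; infer_instance

end

noncomputable section

/-- Generalized `N × L` Vandermonde matrix with power distribution `f`:
entry `(k, l)` is `N^{-1/2} exp(-i ⌊N f(k/N)⌋ ω_l)`. -/
def gvmat (f : ℝ → ℝ) (N L : ℕ) (ω : Fin L → ℝ) : Matrix (Fin N) (Fin L) ℂ :=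
  fun k l => (Real.sqrt N : ℂ)⁻¹ *
    Complex.exp (-Complex.I * ((⌊(N : ℝ) * f (((k : ℕ) : ℝ) / (N : ℝ))⌋ : ℤ) : ℂ) *
      ((ω l : ℝ) : ℂ))

/-- Generalized Vandermonde mixed moment expansion coefficient `K_{ρ,ω,f,N}`. -/
def KcoefGen (n : ℕ) (f : ℝ → ℝ) (μ : Measure ℝ) [SigmaFinite μ] (ρ : PartN n) (N : ℕ) : ℂ :=
  (N : ℂ) ^ ((ρ.parts.card : ℤ) - (n : ℤ) - 1) *
    ∑ i : Fin n → Fin N,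
      ∫ x : {W // W ∈ ρ.parts} → ℝ,
        Complex.exp (Complex.I * ∑ k : Fin n,
          ((⌊(N : ℝ) * f (((i k : ℕ) : ℝ) / (N : ℝ))⌋ : ℤ) : ℂ) *
            (((x (blkSub ρ (cyc k)) : ℝ) : ℂ) - ((x (blkSub ρ k) : ℝ) : ℂ)))
      ∂(Measure.pi fun _ => μ)

/-- Mixed moment for generalized Vandermonde matrices. -/
def mixedMomentGen (f : ℝ → ℝ) (N L n : ℕ) (μ : Measure ℝ) [SigmaFinite μ]
    (D : Fin n → Matrix (Fin L) (Fin L) ℂ) : ℂ :=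
  ∫ ω, ntr ((List.ofFn fun k : Fin n => D k * (gvmat f N L ω)ᴴ * gvmat f N L ω).prod)
    ∂(phases L μ)

/-- `E[tr_L((V_1ᴴ V_2 V_2ᴴ V_1)^n)]` for independent Vandermonde matrices `V_1, V_2`. -/
def mom2V (μ : Measure ℝ) [SigmaFinite μ] (N L : ℕ) (n : ℕ) : ℂ :=
  ∫ w : (Fin L → ℝ) × (Fin L → ℝ),
    ntr (((vmat N L w.1)ᴴ * vmat N L w.2 * (vmat N L w.2)ᴴ * vmat N L w.1) ^ n)
  ∂((phases L μ).prod (phases L μ))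

/-- The sample covariance matrix `W = K⁻¹ Y Yᴴ` with `Y = V P^{1/2} S + Z`. -/
def sampleCov (N L K : ℕ) (P : Fin L → ℝ)
    (z : (Fin L → ℝ) × ((Fin L → Fin K → ℂ) × (Fin N → Fin K → ℂ))) :
    Matrix (Fin N) (Fin N) ℂ :=
  ((K : ℂ))⁻¹ •
    ((vmat N L z.1 * Matrix.diagonal (fun l => ((Real.sqrt (P l) : ℝ) : ℂ)) * Matrix.of z.2.1
        + Matrix.of z.2.2) *
      (vmat N L z.1 * Matrix.diagonal (fun l => ((Real.sqrt (P l) : ℝ) : ℂ)) * Matrix.of z.2.1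
        + Matrix.of z.2.2)ᴴ)

/-- Joint law of the phases of `V`, the entries of `S` (standard complex Gaussian) and the
entries of `Z` (complex Gaussian of variance `σ²`), all independent. -/
def sampleMeasure (N L K : ℕ) (μ : Measure ℝ) [SigmaFinite μ] (σ : ℝ) :
    Measure ((Fin L → ℝ) × ((Fin L → Fin K → ℂ) × (Fin N → Fin K → ℂ))) :=
  (phases L μ).prod ((gElem L K 1).prod (gElem N K σ))

/-- `E[tr_N(W^i)]` for the model `Y = V P^{1/2} S + Z`, `W = K⁻¹ Y Yᴴ`. -/
def Wmom (N L K : ℕ) (μ : Measure ℝ) [SigmaFinite μ] (σ : ℝ) (P : Fin L → ℝ) (i : ℕ) : ℂ :=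
  ∫ z, ntr ((sampleCov N L K P z) ^ i) ∂(sampleMeasure N L K μ σ)

/-- Moments of the diagonal power matrix: `P_i = tr_L(P^i)`. -/
def Pm (L : ℕ) (P : Fin L → ℝ) (i : ℕ) : ℂ := (L : ℂ)⁻¹ * ∑ l, ((P l : ℝ) : ℂ) ^ i

/-- Sample covariance for the transposed model `Y = Vᵀ S + Z`, `W = K⁻¹ Y Yᴴ`. -/
def sampleCovT (N L K : ℕ)
    (z : (Fin L → ℝ) × ((Fin N → Fin K → ℂ) × (Fin L → Fin K → ℂ))) :
    Matrix (Fin L) (Fin L) ℂ :=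
  ((K : ℂ))⁻¹ •
    (((vmat N L z.1)ᵀ * Matrix.of z.2.1 + Matrix.of z.2.2) *
      ((vmat N L z.1)ᵀ * Matrix.of z.2.1 + Matrix.of z.2.2)ᴴ)

def sampleMeasureT (N L K : ℕ) (μ : Measure ℝ) [SigmaFinite μ] (σ : ℝ) :
    Measure ((Fin L → ℝ) × ((Fin N → Fin K → ℂ) × (Fin L → Fin K → ℂ))) :=
  (phases L μ).prod ((gElem N K 1).prod (gElem L K σ))

/-- `E[tr_L(W^i)]` for the transposed model. -/
def WmomT (N L K : ℕ) (μ : Measure ℝ) [SigmaFinite μ] (σ : ℝ) (i : ℕ) : ℂ :=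
  ∫ z, ntr ((sampleCovT N L K z) ^ i) ∂(sampleMeasureT N L K μ σ)

end

section Aux

open Finset

/-- number of pairs in `[0,N)^2` with sum `s`. -/
private def P2c (N s : ℕ) : ℕ := ((range N ×ˢ range N).filter fun p => p.1 + p.2 = s).card
/-- number of triples `(a,b,c)` in `[0,N)^3` with `a+b = c+v`. -/
private def P3c (N v : ℕ) : ℕ :=
  ((range N ×ˢ range N ×ˢ range N).filter fun p => p.1 + p.2.1 = p.2.2 + v).card
/-- number of triples in `[0,N)^3` with sum `s`. -/
private def T3c (N s : ℕ) : ℕ :=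
  ((range N ×ˢ range N ×ˢ range N).filter fun p => p.1 + p.2.1 + p.2.2 = s).card

private lemma P2c_val (N s : ℕ) : P2c N s = min (s+1) (2*N - 1 - s) := by
  have h : ((range N ×ˢ range N).filter fun p => p.1 + p.2 = s)
      = (Finset.Icc (s+1-N) (min s (N-1))).image (fun a => (a, s-a)) := by
    ext ⟨a,b⟩
    simp only [mem_filter, mem_product, mem_range, mem_image, mem_Icc, Prod.mk.injEq]
    constructor
    · rintro ⟨⟨ha, hb⟩, hs⟩; exact ⟨a, by omega, rfl, by omega⟩
    · rintro ⟨x, hx, rfl, rfl⟩; omega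
  rw [P2c, h, Finset.card_image_of_injective _ (fun x y hxy => (Prod.mk.injEq ..).mp hxy |>.1),
    Nat.card_Icc]
  omega

private lemma P3c_eq_sum (N v : ℕ) : P3c N v = ∑ c ∈ range N, P2c N (c + v) := by
  rw [P3c, Finset.card_eq_sum_card_fiberwise (f := fun p => p.2.2) (t := range N)
    (fun p hp => by simp only [Finset.mem_coe, mem_filter, mem_product, mem_range] at hp ⊢; exact hp.1.2.2)]
  refine Finset.sum_congr rfl fun c hc => ?_
  rw [P2c]
  apply Finset.card_nbij' (i := fun p => (p.1, p.2.1)) (j := fun q => (q.1, q.2, c))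
  · rintro ⟨a, b, c'⟩ hp
    simp only [Finset.mem_coe, mem_filter, mem_product, mem_range] at hp ⊢
    obtain ⟨⟨⟨h1,h2,h3⟩,h4⟩,h5⟩ := hp
    subst h5; exact ⟨⟨h1,h2⟩, by omega⟩
  · rintro ⟨a, b⟩ hq
    simp only [Finset.mem_coe, mem_filter, mem_product, mem_range] at hq ⊢
    simp only [mem_range] at hc
    refine ⟨⟨⟨hq.1.1, hq.1.2, hc⟩, ?_⟩, trivial⟩
    omega
  · rintro ⟨a,b,c'⟩ hp
    simp only [Finset.mem_coe, mem_filter] at hp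
    simp [hp.2]
  · rintro ⟨a,b⟩ _; rfl

private lemma sum_poly4 (n : ℕ) (a b c d e : ℝ) :
    ∑ i ∈ range n, (a + b*i + c*(i:ℝ)^2 + d*(i:ℝ)^3 + e*(i:ℝ)^4)
    = n*a + b*((n:ℝ)*(n-1)/2) + c*((n:ℝ)*(n-1)*(2*n-1)/6) + d*(((n:ℝ)*(n-1)/2)^2)
      + e*((n:ℝ)*(n-1)*(2*n-1)*(3*(n:ℝ)^2-3*n-1)/30) := by
  induction n with
  | zero => simp
  | succ m ih => rw [Finset.sum_range_succ, ih]; push_cast; ring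

private lemma P3c_val (N v : ℕ) (hv : v < N) :
    (P3c N v : ℝ) = ((N:ℝ)^2 + N + 2*N*v - 2*v^2 - 2*v)/2 := by
  have key : (P3c N v : ℝ) = (∑ c ∈ range (N-v), ((c:ℝ) + v + 1))
      + ∑ i ∈ range v, ((N:ℝ) - 1 - i) := by
    rw [P3c_eq_sum]
    push_cast
    rw [Finset.range_eq_Ico, ← Finset.sum_Ico_consecutive (fun c => (P2c N (c+v) : ℝ))
      (Nat.zero_le (N-v)) (by omega), ← Finset.range_eq_Ico,
      Finset.sum_Ico_eq_sum_range]
    congr 1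
    · refine Finset.sum_congr rfl fun c hc => ?_
      simp only [mem_range] at hc
      rw [P2c_val]
      have : min (c+v+1) (2*N-1-(c+v)) = c+v+1 := by omega
      rw [this]; push_cast; ring
    · have hNv : N - (N - v) = v := by omega
      rw [hNv]
      refine Finset.sum_congr rfl fun i hi => ?_
      simp only [mem_range] at hi
      rw [P2c_val]
      have : min ((N-v+i)+v+1) (2*N-1-((N-v+i)+v)) = N-1-i := by omega
      rw [this]
      have : ((N-1-i : ℕ) : ℝ) = (N:ℝ) - 1 - i := by
        have : i ≤ N - 1 := by omega
        push_cast [Nat.cast_sub this, Nat.cast_sub (by omega : 1 ≤ N)]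
        ring
      rw [this]
  rw [key]
  have h1 : ∀ c ∈ range (N-v), ((c:ℝ) + v + 1)
      = ((v:ℝ)+1) + 1*c + 0*(c:ℝ)^2 + 0*(c:ℝ)^3 + 0*(c:ℝ)^4 := fun c _ => by ring
  have h2 : ∀ i ∈ range v, ((N:ℝ) - 1 - i)
      = ((N:ℝ)-1) + (-1)*i + 0*(i:ℝ)^2 + 0*(i:ℝ)^3 + 0*(i:ℝ)^4 := fun i _ => by ring
  rw [Finset.sum_congr rfl h1, Finset.sum_congr rfl h2, sum_poly4, sum_poly4]
  have hc : ((N - v : ℕ) : ℝ) = (N:ℝ) - v := by push_cast [Nat.cast_sub hv.le]; ring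
  rw [hc]
  ring

private lemma sumE1 (N : ℕ) : ∑ v ∈ range N, (P3c N v : ℝ) = (2*(N:ℝ)^3 + N)/3 := by
  have h : ∀ v ∈ range N, (P3c N v : ℝ)
      = ((N:ℝ)^2+N)/2 + ((N:ℝ)-1)*v + (-1)*(v:ℝ)^2 + 0*(v:ℝ)^3 + 0*(v:ℝ)^4 := by
    intro v hv; rw [P3c_val N v (mem_range.mp hv)]; ring
  rw [Finset.sum_congr rfl h, sum_poly4]; ring

private lemma sumE3 (N : ℕ) : ∑ v ∈ range N, (P3c N v : ℝ)^2
    = 9/20*(N:ℝ)^5 + 5/12*(N:ℝ)^3 + 2/15*(N:ℝ) := by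
  have h : ∀ v ∈ range N, (P3c N v : ℝ)^2
      = (((N:ℝ)^2+N)/2)^2 + (((N:ℝ)^2+N)*((N:ℝ)-1))*v
        + (((N:ℝ)-1)^2 - ((N:ℝ)^2+N))*(v:ℝ)^2 + (-(2*((N:ℝ)-1)))*(v:ℝ)^3 + 1*(v:ℝ)^4 := by
    intro v hv; rw [P3c_val N v (mem_range.mp hv)]; ring
  rw [Finset.sum_congr rfl h, sum_poly4]; ring

private lemma sumE2 (N : ℕ) :
    ∑ s ∈ range (2*N-1), (P2c N s : ℝ)^3 = ((N:ℝ)^4 + (N:ℝ)^2)/2 := by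
  rcases Nat.eq_zero_or_pos N with h | h
  · simp [h]
  have key : ∑ s ∈ range (2*N-1), (P2c N s : ℝ)^3
      = (∑ s ∈ range N, ((s:ℝ)+1)^3) + ∑ i ∈ range (N-1), ((N:ℝ)-1-i)^3 := by
    rw [Finset.range_eq_Ico, ← Finset.sum_Ico_consecutive (fun s => (P2c N s : ℝ)^3)
      (Nat.zero_le N) (by omega), ← Finset.range_eq_Ico, Finset.sum_Ico_eq_sum_range]
    congr 1
    · refine Finset.sum_congr rfl fun s hs => ?_
      simp only [mem_range] at hs
      rw [P2c_val]
      have : min (s+1) (2*N-1-s) = s+1 := by omega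
      rw [this]; push_cast; ring
    · have h2 : 2*N-1-N = N-1 := by omega
      rw [h2]
      refine Finset.sum_congr rfl fun i hi => ?_
      simp only [mem_range] at hi
      rw [P2c_val]
      have h3 : min ((N+i)+1) (2*N-1-(N+i)) = N-1-i := by omega
      rw [h3]
      have : ((N-1-i : ℕ) : ℝ) = (N:ℝ) - 1 - i := by
        push_cast [Nat.cast_sub (by omega : i ≤ N - 1), Nat.cast_sub (by omega : 1 ≤ N)]
        ring
      rw [this]
  rw [key]
  have h1 : ∀ s ∈ range N, ((s:ℝ)+1)^3
      = 1 + 3*(s:ℝ) + 3*(s:ℝ)^2 + 1*(s:ℝ)^3 + 0*(s:ℝ)^4 := fun s _ => by ring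
  have h2 : ∀ i ∈ range (N-1), ((N:ℝ)-1-i)^3
      = ((N:ℝ)-1)^3 + (-(3*((N:ℝ)-1)^2))*i + (3*((N:ℝ)-1))*(i:ℝ)^2
        + (-1)*(i:ℝ)^3 + 0*(i:ℝ)^4 := fun i _ => by ring
  rw [Finset.sum_congr rfl h1, Finset.sum_congr rfl h2, sum_poly4, sum_poly4]
  have hc : ((N - 1 : ℕ) : ℝ) = (N:ℝ) - 1 := by
    push_cast [Nat.cast_sub (by omega : 1 ≤ N)]; ring
  rw [hc]
  ring

private lemma T3c_eq_sum (N s : ℕ) : T3c N s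
    = ∑ c ∈ range N, ((range N ×ˢ range N).filter fun p => p.1 + p.2 + c = s).card := by
  rw [T3c, Finset.card_eq_sum_card_fiberwise (f := fun p => p.2.2) (t := range N)
    (fun p hp => by simp only [Finset.mem_coe, mem_filter, mem_product, mem_range] at hp ⊢; exact hp.1.2.2)]
  refine Finset.sum_congr rfl fun c hc => ?_
  apply Finset.card_nbij' (i := fun p => (p.1, p.2.1)) (j := fun q => (q.1, q.2, c))
  · rintro ⟨a, b, c'⟩ hp
    simp only [Finset.mem_coe, mem_filter, mem_product, mem_range] at hp ⊢
    obtain ⟨⟨⟨h1,h2,h3⟩,h4⟩,h5⟩ := hp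
    subst h5; exact ⟨⟨h1,h2⟩, by omega⟩
  · rintro ⟨a, b⟩ hq
    simp only [Finset.mem_coe, mem_filter, mem_product, mem_range] at hq ⊢
    simp only [mem_range] at hc
    exact ⟨⟨⟨hq.1.1, hq.1.2, hc⟩, by omega⟩, trivial⟩
  · rintro ⟨a,b,c'⟩ hp
    simp only [Finset.mem_coe, mem_filter] at hp
    simp [hp.2]
  · rintro ⟨a,b⟩ _; rfl

private lemma T3c_low (N s : ℕ) (hs : s < N) : T3c N s = ∑ c ∈ range (s+1), (s + 1 - c) := by
  rw [T3c_eq_sum]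
  have h1 : ∀ c ∈ range N,
      ((range N ×ˢ range N).filter fun p => p.1 + p.2 + c = s).card
      = if c ≤ s then s + 1 - c else 0 := by
    intro c hc
    simp only [mem_range] at hc
    split_ifs with h
    · have : ((range N ×ˢ range N).filter fun p => p.1 + p.2 + c = s)
          = ((range N ×ˢ range N).filter fun p => p.1 + p.2 = s - c) := by
        apply Finset.filter_congr
        rintro ⟨a,b⟩ _
        constructor <;> intro <;> omega
      rw [this, ← P2c, P2c_val]
      omega
    · rw [Finset.card_eq_zero, Finset.filter_eq_empty_iff]
      rintro ⟨a,b⟩ _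
      simp only
      omega
  rw [Finset.sum_congr rfl h1, Finset.sum_ite, Finset.sum_const, smul_zero, add_zero]
  have h2 : (range N).filter (fun c => c ≤ s) = range (s+1) := by
    ext c; simp only [mem_filter, mem_range]; omega
  rw [h2]

private lemma T3c_mid (N e : ℕ) (he : e < N) : T3c N (N - 1 + e) = P3c N e := by
  rw [T3c, P3c]
  apply Finset.card_nbij' (i := fun p => (p.1, p.2.1, N - 1 - p.2.2))
    (j := fun q => (q.1, q.2.1, N - 1 - q.2.2))
  · rintro ⟨a,b,c⟩ hp
    simp only [Finset.mem_coe, mem_filter, mem_product, mem_range] at hp ⊢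
    omega
  · rintro ⟨a,b,c⟩ hq
    simp only [Finset.mem_coe, mem_filter, mem_product, mem_range] at hq ⊢
    omega
  · rintro ⟨a,b,c⟩ hp
    simp only [Finset.mem_coe, mem_filter, mem_product, mem_range] at hp
    simp only [Prod.mk.injEq]
    refine ⟨trivial, trivial, by omega⟩
  · rintro ⟨a,b,c⟩ hq
    simp only [Finset.mem_coe, mem_filter, mem_product, mem_range] at hq
    simp only [Prod.mk.injEq]
    refine ⟨trivial, trivial, by omega⟩

private lemma T3c_refl (N s : ℕ) (hs : s ≤ 3*(N-1)) : T3c N s = T3c N (3*(N-1) - s) := by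
  rw [T3c, T3c]
  apply Finset.card_nbij' (i := fun p => (N-1-p.1, N-1-p.2.1, N-1-p.2.2))
    (j := fun q => (N-1-q.1, N-1-q.2.1, N-1-q.2.2))
  · rintro ⟨a,b,c⟩ hp
    simp only [Finset.mem_coe, mem_filter, mem_product, mem_range] at hp ⊢
    omega
  · rintro ⟨a,b,c⟩ hq
    simp only [Finset.mem_coe, mem_filter, mem_product, mem_range] at hq ⊢
    omega
  · rintro ⟨a,b,c⟩ hp
    simp only [Finset.mem_coe, mem_filter, mem_product, mem_range] at hp
    simp only [Prod.mk.injEq]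
    omega
  · rintro ⟨a,b,c⟩ hq
    simp only [Finset.mem_coe, mem_filter, mem_product, mem_range] at hq
    simp only [Prod.mk.injEq]
    omega

private lemma T3c_low_val (N s : ℕ) (hs : s < N) :
    (T3c N s : ℝ) = ((s:ℝ)+1)*((s:ℝ)+2)/2 := by
  rw [T3c_low N s hs, Nat.cast_sum]
  have h : ∀ c ∈ range (s+1), ((s + 1 - c : ℕ) : ℝ)
      = ((s:ℝ)+1) + (-1)*c + 0*(c:ℝ)^2 + 0*(c:ℝ)^3 + 0*(c:ℝ)^4 := by
    intro c hc
    simp only [mem_range] at hc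
    push_cast [Nat.cast_sub (by omega : c ≤ s + 1)]
    ring
  rw [Finset.sum_congr rfl h, sum_poly4]
  push_cast
  ring

private lemma sumE4 (N : ℕ) (hN : 1 ≤ N) : ∑ s ∈ range (3*N-2), (T3c N s : ℝ)^2
    = 11/20*(N:ℝ)^5 + 1/4*(N:ℝ)^3 + 1/5*(N:ℝ) := by
  have key : ∑ s ∈ range (3*N-2), (T3c N s : ℝ)^2
      = (∑ s ∈ range (N-1), (T3c N s : ℝ)^2)
        + ((∑ i ∈ range N, (T3c N (N-1+i) : ℝ)^2)
          + ∑ i ∈ range (N-1), (T3c N (2*N-1+i) : ℝ)^2) := by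
    rw [Finset.range_eq_Ico,
      ← Finset.sum_Ico_consecutive (fun s => (T3c N s : ℝ)^2) (Nat.zero_le (N-1))
        (by omega : N-1 ≤ 3*N-2),
      ← Finset.sum_Ico_consecutive (fun s => (T3c N s : ℝ)^2) (by omega : N-1 ≤ 2*N-1)
        (by omega : 2*N-1 ≤ 3*N-2),
      ← Finset.range_eq_Ico, Finset.sum_Ico_eq_sum_range, Finset.sum_Ico_eq_sum_range]
    congr 1
    congr 1
    · apply Finset.sum_congr (by congr 1; omega)
      intro i _; rfl
    · apply Finset.sum_congr (by congr 1; omega)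
      intro i _; rfl
  rw [key]
  have part1 : ∑ s ∈ range (N-1), (T3c N s : ℝ)^2
      = ∑ s ∈ range (N-1), (1 + 3*(s:ℝ) + 13/4*(s:ℝ)^2 + 3/2*(s:ℝ)^3 + 1/4*(s:ℝ)^4) := by
    refine Finset.sum_congr rfl fun s hs => ?_
    simp only [mem_range] at hs
    rw [T3c_low_val N s (by omega)]
    ring
  have part2 : ∑ i ∈ range N, (T3c N (N-1+i) : ℝ)^2 = ∑ i ∈ range N, (P3c N i : ℝ)^2 := by
    refine Finset.sum_congr rfl fun i hi => ?_
    simp only [mem_range] at hi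
    rw [T3c_mid N i hi]
  have part3 : ∑ i ∈ range (N-1), (T3c N (2*N-1+i) : ℝ)^2
      = ∑ i ∈ range (N-1),
          ((((N:ℝ)^2-N)/2)^2 + ((((N:ℝ)^2-N)*(-(2*N-1)))/2)*i
            + (((2*(N:ℝ)-1)^2+2*((N:ℝ)^2-N))/4)*(i:ℝ)^2 + (-(2*(N:ℝ)-1)/2)*(i:ℝ)^3
            + 1/4*(i:ℝ)^4) := by
    refine Finset.sum_congr rfl fun i hi => ?_
    simp only [mem_range] at hi
    rw [T3c_refl N (2*N-1+i) (by omega), show 3*(N-1) - (2*N-1+i) = N-2-i by omega,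
      T3c_low_val N (N-2-i) (by omega)]
    have h1 : ((N - 2 - i : ℕ) : ℝ) = (N:ℝ) - 2 - i := by
      push_cast [Nat.cast_sub (by omega : i ≤ N - 2), Nat.cast_sub (by omega : 2 ≤ N)]
      ring
    rw [h1]
    ring
  rw [part1, part2, part3, sumE3, sum_poly4, sum_poly4]
  have hc : ((N - 1 : ℕ) : ℝ) = (N:ℝ) - 1 := by
    push_cast [Nat.cast_sub hN]; ring
  rw [hc]
  ring

private lemma DD_eq_P2c (N s : ℕ) :
    ((range N ×ˢ range N).filter fun p => p.1 + (N-1) = p.2 + s).card = P2c N s := by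
  rw [P2c]
  apply Finset.card_nbij' (i := fun p => (p.1, N-1-p.2)) (j := fun q => (q.1, N-1-q.2))
  · rintro ⟨a,b⟩ hp
    simp only [Finset.mem_coe, mem_filter, mem_product, mem_range] at hp ⊢
    omega
  · rintro ⟨a,b⟩ hq
    simp only [Finset.mem_coe, mem_filter, mem_product, mem_range] at hq ⊢
    omega
  · rintro ⟨a,b⟩ hp
    simp only [Finset.mem_coe, mem_filter, mem_product, mem_range] at hp
    simp only [Prod.mk.injEq]
    exact ⟨trivial, by omega⟩
  · rintro ⟨a,b⟩ hq
    simp only [Finset.mem_coe, mem_filter, mem_product, mem_range] at hq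
    simp only [Prod.mk.injEq]
    exact ⟨trivial, by omega⟩

end Aux

section Reds
open Finset
private lemma red1 (N : ℕ) (ρ : PartN 4) (h : ρ.parts = {({0, 2} : Finset (Fin 4)), {1, 3}}) :
    Svol 4 ρ N = ∑ v ∈ range N, P3c N v := by
  have hQ : ∀ i : Fin 4 → Fin N,
      (∀ W ∈ ρ.parts, ∑ k ∈ W, ((i (cyc k) : ℕ)) = ∑ k ∈ W, ((i k : ℕ)))
      ↔ ((i 1 : ℕ) + (i 3 : ℕ) = (i 2 : ℕ) + (i 0 : ℕ)) := by
    intro i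
    rw [h]
    simp only [Finset.mem_insert, Finset.mem_singleton, forall_eq_or_imp, forall_eq]
    rw [Finset.sum_pair (by decide : (0:Fin 4) ≠ 2),
      Finset.sum_pair (by decide : (0:Fin 4) ≠ 2),
      Finset.sum_pair (by decide : (1:Fin 4) ≠ 3),
      Finset.sum_pair (by decide : (1:Fin 4) ≠ 3),
      show cyc (0:Fin 4) = 3 by decide, show cyc (2:Fin 4) = 1 by decide,
      show cyc (1:Fin 4) = 0 by decide, show cyc (3:Fin 4) = 2 by decide]
    omega
  rw [Svol, Nat.card_eq_fintype_card, Fintype.card_subtype]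
  rw [Finset.card_eq_sum_card_fiberwise (f := fun i : Fin 4 → Fin N => (i 0 : ℕ))
    (t := range N) (fun i _ => mem_range.mpr (i 0).isLt)]
  refine Finset.sum_congr rfl fun v hv => ?_
  simp only [mem_range] at hv
  rw [P3c]
  apply Finset.card_bij (i := fun i _ => ((i 1 : ℕ), (i 3 : ℕ), (i 2 : ℕ)))
  · intro i hi
    simp only [mem_filter, mem_univ, true_and] at hi
    obtain ⟨hQ', h0⟩ := hi
    rw [hQ i] at hQ'
    simp only [mem_filter, mem_product, mem_range]
    refine ⟨⟨(i 1).isLt, (i 3).isLt, (i 2).isLt⟩, by omega⟩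
  · intro i hi j hj hij
    simp only [mem_filter, mem_univ, true_and] at hi hj
    simp only [Prod.mk.injEq] at hij
    have e0 : i 0 = j 0 := Fin.ext (by omega)
    have e1 : i 1 = j 1 := Fin.ext (by omega)
    have e2 : i 2 = j 2 := Fin.ext (by omega)
    have e3 : i 3 = j 3 := Fin.ext (by omega)
    funext k
    fin_cases k
    · exact e0
    · exact e1
    · exact e2
    · exact e3
  · rintro ⟨a, b, c⟩ hq
    simp only [mem_filter, mem_product, mem_range] at hq
    obtain ⟨⟨ha, hb, hc⟩, habc⟩ := hq
    refine ⟨![⟨v, hv⟩, ⟨a, ha⟩, ⟨c, hc⟩, ⟨b, hb⟩], ?_, ?_⟩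
    · simp only [mem_filter, mem_univ, true_and]
      constructor
      · rw [hQ]
        simp [Matrix.cons_val_zero, Matrix.cons_val_one]
        omega
      · simp
    · simp

private lemma red2 (N : ℕ) (ρ : PartN 6)
    (h : ρ.parts = {({0, 3} : Finset (Fin 6)), {1, 4}, {2, 5}}) :
    Svol 6 ρ N = ∑ s ∈ range (2*N-1), P2c N s * (P2c N s * P2c N s) := by
  have hQ : ∀ i : Fin 6 → Fin N,
      (∀ W ∈ ρ.parts, ∑ k ∈ W, ((i (cyc k) : ℕ)) = ∑ k ∈ W, ((i k : ℕ)))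
      ↔ ((i 5 : ℕ) + (i 2 : ℕ) = (i 0 : ℕ) + (i 3 : ℕ)
        ∧ (i 0 : ℕ) + (i 3 : ℕ) = (i 1 : ℕ) + (i 4 : ℕ)
        ∧ (i 1 : ℕ) + (i 4 : ℕ) = (i 2 : ℕ) + (i 5 : ℕ)) := by
    intro i
    rw [h]
    simp only [Finset.mem_insert, Finset.mem_singleton, forall_eq_or_imp, forall_eq]
    rw [Finset.sum_pair (by decide : (0:Fin 6) ≠ 3), Finset.sum_pair (by decide : (0:Fin 6) ≠ 3),
      Finset.sum_pair (by decide : (1:Fin 6) ≠ 4), Finset.sum_pair (by decide : (1:Fin 6) ≠ 4),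
      Finset.sum_pair (by decide : (2:Fin 6) ≠ 5), Finset.sum_pair (by decide : (2:Fin 6) ≠ 5),
      show cyc (0:Fin 6) = 5 by decide, show cyc (3:Fin 6) = 2 by decide,
      show cyc (1:Fin 6) = 0 by decide, show cyc (4:Fin 6) = 3 by decide,
      show cyc (2:Fin 6) = 1 by decide, show cyc (5:Fin 6) = 4 by decide]
  rw [Svol, Nat.card_eq_fintype_card, Fintype.card_subtype]
  have hmap : ∀ x : Fin 6 → Fin N, ((x 0 : ℕ) + (x 3 : ℕ)) ∈ range (2*N-1) := by
    intro x
    have h1 := (x 0).isLt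
    have h2 := (x 3).isLt
    exact mem_range.mpr (by omega)
  rw [Finset.card_eq_sum_card_fiberwise
    (f := fun i : Fin 6 → Fin N => (i 0 : ℕ) + (i 3 : ℕ)) (t := range (2*N-1))
    (fun x _ => hmap x)]
  refine Finset.sum_congr rfl fun s hs => ?_
  simp only [mem_range] at hs
  rw [show P2c N s * (P2c N s * P2c N s)
    = (((range N ×ˢ range N).filter fun p => p.1 + p.2 = s) ×ˢ
       (((range N ×ˢ range N).filter fun p => p.1 + p.2 = s) ×ˢ
        ((range N ×ˢ range N).filter fun p => p.1 + p.2 = s))).card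
    by rw [Finset.card_product, Finset.card_product]; rfl]
  apply Finset.card_bij (i := fun i _ =>
    (((i 0 : ℕ), (i 3 : ℕ)), ((i 1 : ℕ), (i 4 : ℕ)), ((i 2 : ℕ), (i 5 : ℕ))))
  · intro i hi
    simp only [mem_filter, mem_univ, true_and] at hi
    obtain ⟨hQ', h0⟩ := hi
    rw [hQ i] at hQ'
    simp only [mem_product, mem_filter, mem_range]
    have := (i 0).isLt; have := (i 1).isLt; have := (i 2).isLt
    have := (i 3).isLt; have := (i 4).isLt; have := (i 5).isLt
    refine ⟨⟨⟨by omega, by omega⟩, by omega⟩, ⟨⟨by omega, by omega⟩, by omega⟩,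
      ⟨⟨by omega, by omega⟩, by omega⟩⟩
  · intro i hi j hj hij
    simp only [Prod.mk.injEq] at hij
    have e0 : i 0 = j 0 := Fin.ext (by omega)
    have e1 : i 1 = j 1 := Fin.ext (by omega)
    have e2 : i 2 = j 2 := Fin.ext (by omega)
    have e3 : i 3 = j 3 := Fin.ext (by omega)
    have e4 : i 4 = j 4 := Fin.ext (by omega)
    have e5 : i 5 = j 5 := Fin.ext (by omega)
    funext k
    fin_cases k
    · exact e0
    · exact e1
    · exact e2
    · exact e3
    · exact e4
    · exact e5
  · rintro ⟨⟨a, b⟩, ⟨c, d⟩, ⟨e, f⟩⟩ hq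
    simp only [mem_product, mem_filter, mem_range] at hq
    obtain ⟨⟨⟨ha, hb⟩, hab⟩, ⟨⟨hc, hd⟩, hcd⟩, ⟨⟨he, hf⟩, hef⟩⟩ := hq
    refine ⟨![⟨a, ha⟩, ⟨c, hc⟩, ⟨e, he⟩, ⟨b, hb⟩, ⟨d, hd⟩, ⟨f, hf⟩], ?_, ?_⟩
    · simp only [mem_filter, mem_univ, true_and]
      have t0 : ((![⟨a, ha⟩, ⟨c, hc⟩, ⟨e, he⟩, ⟨b, hb⟩, ⟨d, hd⟩, ⟨f, hf⟩] : Fin 6 → Fin N) 0 : ℕ) = a := rfl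
      have t1 : ((![⟨a, ha⟩, ⟨c, hc⟩, ⟨e, he⟩, ⟨b, hb⟩, ⟨d, hd⟩, ⟨f, hf⟩] : Fin 6 → Fin N) 1 : ℕ) = c := rfl
      have t2 : ((![⟨a, ha⟩, ⟨c, hc⟩, ⟨e, he⟩, ⟨b, hb⟩, ⟨d, hd⟩, ⟨f, hf⟩] : Fin 6 → Fin N) 2 : ℕ) = e := rfl
      have t3 : ((![⟨a, ha⟩, ⟨c, hc⟩, ⟨e, he⟩, ⟨b, hb⟩, ⟨d, hd⟩, ⟨f, hf⟩] : Fin 6 → Fin N) 3 : ℕ) = b := rfl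
      have t4 : ((![⟨a, ha⟩, ⟨c, hc⟩, ⟨e, he⟩, ⟨b, hb⟩, ⟨d, hd⟩, ⟨f, hf⟩] : Fin 6 → Fin N) 4 : ℕ) = d := rfl
      have t5 : ((![⟨a, ha⟩, ⟨c, hc⟩, ⟨e, he⟩, ⟨b, hb⟩, ⟨d, hd⟩, ⟨f, hf⟩] : Fin 6 → Fin N) 5 : ℕ) = f := rfl
      constructor
      · rw [hQ]
        rw [t0, t1, t2, t3, t4, t5]
        refine ⟨by omega, by omega, by omega⟩
      · rw [t0, t3]
        omega
    · rfl

private lemma red3 (N : ℕ) (ρ : PartN 6)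
    (h : ρ.parts = {({0, 3} : Finset (Fin 6)), {1, 5}, {2, 4}}) :
    Svol 6 ρ N = ∑ s ∈ range (2*N-1), P2c N s * (P2c N s * P2c N s) := by
  have hQ : ∀ i : Fin 6 → Fin N,
      (∀ W ∈ ρ.parts, ∑ k ∈ W, ((i (cyc k) : ℕ)) = ∑ k ∈ W, ((i k : ℕ)))
      ↔ ((i 5 : ℕ) + (i 2 : ℕ) = (i 0 : ℕ) + (i 3 : ℕ)
        ∧ (i 0 : ℕ) + (i 4 : ℕ) = (i 1 : ℕ) + (i 5 : ℕ)
        ∧ (i 1 : ℕ) + (i 3 : ℕ) = (i 2 : ℕ) + (i 4 : ℕ)) := by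
    intro i
    rw [h]
    simp only [Finset.mem_insert, Finset.mem_singleton, forall_eq_or_imp, forall_eq]
    rw [Finset.sum_pair (by decide : (0:Fin 6) ≠ 3), Finset.sum_pair (by decide : (0:Fin 6) ≠ 3),
      Finset.sum_pair (by decide : (1:Fin 6) ≠ 5), Finset.sum_pair (by decide : (1:Fin 6) ≠ 5),
      Finset.sum_pair (by decide : (2:Fin 6) ≠ 4), Finset.sum_pair (by decide : (2:Fin 6) ≠ 4),
      show cyc (0:Fin 6) = 5 by decide, show cyc (3:Fin 6) = 2 by decide,
      show cyc (1:Fin 6) = 0 by decide, show cyc (5:Fin 6) = 4 by decide,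
      show cyc (2:Fin 6) = 1 by decide, show cyc (4:Fin 6) = 3 by decide]
  rw [Svol, Nat.card_eq_fintype_card, Fintype.card_subtype]
  have hmap : ∀ x : Fin 6 → Fin N, ((x 0 : ℕ) + (N-1) - (x 5 : ℕ)) ∈ range (2*N-1) := by
    intro x
    have h1 := (x 0).isLt
    have h2 := (x 5).isLt
    exact mem_range.mpr (by omega)
  rw [Finset.card_eq_sum_card_fiberwise
    (f := fun i : Fin 6 → Fin N => (i 0 : ℕ) + (N-1) - (i 5 : ℕ)) (t := range (2*N-1))
    (fun x _ => hmap x)]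
  refine Finset.sum_congr rfl fun s hs => ?_
  simp only [mem_range] at hs
  rw [show P2c N s * (P2c N s * P2c N s)
    = (((range N ×ˢ range N).filter fun p => p.1 + (N-1) = p.2 + s) ×ˢ
       (((range N ×ˢ range N).filter fun p => p.1 + (N-1) = p.2 + s) ×ˢ
        ((range N ×ˢ range N).filter fun p => p.1 + (N-1) = p.2 + s))).card
    by rw [Finset.card_product, Finset.card_product, DD_eq_P2c]]
  apply Finset.card_bij (i := fun i _ =>
    (((i 0 : ℕ), (i 5 : ℕ)), ((i 2 : ℕ), (i 3 : ℕ)), ((i 1 : ℕ), (i 4 : ℕ))))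
  · intro i hi
    simp only [mem_filter, mem_univ, true_and] at hi
    obtain ⟨hQ', h0⟩ := hi
    rw [hQ i] at hQ'
    simp only [mem_product, mem_filter, mem_range]
    have := (i 0).isLt; have := (i 1).isLt; have := (i 2).isLt
    have := (i 3).isLt; have := (i 4).isLt; have := (i 5).isLt
    refine ⟨⟨⟨by omega, by omega⟩, by omega⟩, ⟨⟨by omega, by omega⟩, by omega⟩,
      ⟨⟨by omega, by omega⟩, by omega⟩⟩
  · intro i hi j hj hij
    simp only [Prod.mk.injEq] at hij
    have e0 : i 0 = j 0 := Fin.ext (by omega)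
    have e1 : i 1 = j 1 := Fin.ext (by omega)
    have e2 : i 2 = j 2 := Fin.ext (by omega)
    have e3 : i 3 = j 3 := Fin.ext (by omega)
    have e4 : i 4 = j 4 := Fin.ext (by omega)
    have e5 : i 5 = j 5 := Fin.ext (by omega)
    funext k
    fin_cases k
    · exact e0
    · exact e1
    · exact e2
    · exact e3
    · exact e4
    · exact e5
  · rintro ⟨⟨a, b⟩, ⟨c, d⟩, ⟨e, f⟩⟩ hq
    simp only [mem_product, mem_filter, mem_range] at hq
    obtain ⟨⟨⟨ha, hb⟩, hab⟩, ⟨⟨hc, hd⟩, hcd⟩, ⟨⟨he, hf⟩, hef⟩⟩ := hq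
    refine ⟨![⟨a, ha⟩, ⟨e, he⟩, ⟨c, hc⟩, ⟨d, hd⟩, ⟨f, hf⟩, ⟨b, hb⟩], ?_, ?_⟩
    · simp only [mem_filter, mem_univ, true_and]
      have t0 : ((![⟨a, ha⟩, ⟨e, he⟩, ⟨c, hc⟩, ⟨d, hd⟩, ⟨f, hf⟩, ⟨b, hb⟩] : Fin 6 → Fin N) 0 : ℕ) = a := rfl
      have t1 : ((![⟨a, ha⟩, ⟨e, he⟩, ⟨c, hc⟩, ⟨d, hd⟩, ⟨f, hf⟩, ⟨b, hb⟩] : Fin 6 → Fin N) 1 : ℕ) = e := rfl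
      have t2 : ((![⟨a, ha⟩, ⟨e, he⟩, ⟨c, hc⟩, ⟨d, hd⟩, ⟨f, hf⟩, ⟨b, hb⟩] : Fin 6 → Fin N) 2 : ℕ) = c := rfl
      have t3 : ((![⟨a, ha⟩, ⟨e, he⟩, ⟨c, hc⟩, ⟨d, hd⟩, ⟨f, hf⟩, ⟨b, hb⟩] : Fin 6 → Fin N) 3 : ℕ) = d := rfl
      have t4 : ((![⟨a, ha⟩, ⟨e, he⟩, ⟨c, hc⟩, ⟨d, hd⟩, ⟨f, hf⟩, ⟨b, hb⟩] : Fin 6 → Fin N) 4 : ℕ) = f := rfl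
      have t5 : ((![⟨a, ha⟩, ⟨e, he⟩, ⟨c, hc⟩, ⟨d, hd⟩, ⟨f, hf⟩, ⟨b, hb⟩] : Fin 6 → Fin N) 5 : ℕ) = b := rfl
      constructor
      · rw [hQ]
        rw [t0, t1, t2, t3, t4, t5]
        refine ⟨by omega, by omega, by omega⟩
      · rw [t0, t5]
        omega
    · rfl

private lemma red4 (N : ℕ) (ρ : PartN 6)
    (h : ρ.parts = {({0, 2, 4} : Finset (Fin 6)), {1, 3, 5}}) :
    Svol 6 ρ N = ∑ s ∈ range (3*N-2), T3c N s * T3c N s := by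
  have hQ : ∀ i : Fin 6 → Fin N,
      (∀ W ∈ ρ.parts, ∑ k ∈ W, ((i (cyc k) : ℕ)) = ∑ k ∈ W, ((i k : ℕ)))
      ↔ ((i 5 : ℕ) + ((i 1 : ℕ) + (i 3 : ℕ)) = (i 0 : ℕ) + ((i 2 : ℕ) + (i 4 : ℕ))
        ∧ (i 0 : ℕ) + ((i 2 : ℕ) + (i 4 : ℕ)) = (i 1 : ℕ) + ((i 3 : ℕ) + (i 5 : ℕ))) := by
    intro i
    rw [h]
    simp only [Finset.mem_insert, Finset.mem_singleton, forall_eq_or_imp, forall_eq]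
    rw [Finset.sum_insert (by decide : (0:Fin 6) ∉ ({2,4} : Finset (Fin 6))),
      Finset.sum_insert (by decide : (0:Fin 6) ∉ ({2,4} : Finset (Fin 6))),
      Finset.sum_insert (by decide : (1:Fin 6) ∉ ({3,5} : Finset (Fin 6))),
      Finset.sum_insert (by decide : (1:Fin 6) ∉ ({3,5} : Finset (Fin 6))),
      Finset.sum_pair (by decide : (2:Fin 6) ≠ 4), Finset.sum_pair (by decide : (2:Fin 6) ≠ 4),
      Finset.sum_pair (by decide : (3:Fin 6) ≠ 5), Finset.sum_pair (by decide : (3:Fin 6) ≠ 5),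
      show cyc (0:Fin 6) = 5 by decide, show cyc (2:Fin 6) = 1 by decide,
      show cyc (4:Fin 6) = 3 by decide, show cyc (1:Fin 6) = 0 by decide,
      show cyc (3:Fin 6) = 2 by decide, show cyc (5:Fin 6) = 4 by decide]
  rw [Svol, Nat.card_eq_fintype_card, Fintype.card_subtype]
  have hmap : ∀ x : Fin 6 → Fin N, ((x 0 : ℕ) + (x 2 : ℕ) + (x 4 : ℕ)) ∈ range (3*N-2) := by
    intro x
    have h1 := (x 0).isLt
    have h2 := (x 2).isLt
    have h3 := (x 4).isLt
    exact mem_range.mpr (by omega)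
  rw [Finset.card_eq_sum_card_fiberwise
    (f := fun i : Fin 6 → Fin N => (i 0 : ℕ) + (i 2 : ℕ) + (i 4 : ℕ)) (t := range (3*N-2))
    (fun x _ => hmap x)]
  refine Finset.sum_congr rfl fun s hs => ?_
  simp only [mem_range] at hs
  rw [show T3c N s * T3c N s
    = (((range N ×ˢ range N ×ˢ range N).filter fun p => p.1 + p.2.1 + p.2.2 = s) ×ˢ
       ((range N ×ˢ range N ×ˢ range N).filter fun p => p.1 + p.2.1 + p.2.2 = s)).card
    by rw [Finset.card_product]; rfl]
  apply Finset.card_bij (i := fun i _ =>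
    (((i 0 : ℕ), (i 2 : ℕ), (i 4 : ℕ)), ((i 1 : ℕ), (i 3 : ℕ), (i 5 : ℕ))))
  · intro i hi
    simp only [mem_filter, mem_univ, true_and] at hi
    obtain ⟨hQ', h0⟩ := hi
    rw [hQ i] at hQ'
    simp only [mem_product, mem_filter, mem_range]
    have := (i 0).isLt; have := (i 1).isLt; have := (i 2).isLt
    have := (i 3).isLt; have := (i 4).isLt; have := (i 5).isLt
    refine ⟨⟨⟨by omega, by omega, by omega⟩, by omega⟩,
      ⟨⟨by omega, by omega, by omega⟩, by omega⟩⟩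
  · intro i hi j hj hij
    simp only [Prod.mk.injEq] at hij
    have e0 : i 0 = j 0 := Fin.ext (by omega)
    have e1 : i 1 = j 1 := Fin.ext (by omega)
    have e2 : i 2 = j 2 := Fin.ext (by omega)
    have e3 : i 3 = j 3 := Fin.ext (by omega)
    have e4 : i 4 = j 4 := Fin.ext (by omega)
    have e5 : i 5 = j 5 := Fin.ext (by omega)
    funext k
    fin_cases k
    · exact e0
    · exact e1
    · exact e2
    · exact e3
    · exact e4
    · exact e5
  · rintro ⟨⟨a, b, c⟩, ⟨d, e, f⟩⟩ hq
    simp only [mem_product, mem_filter, mem_range] at hq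
    obtain ⟨⟨⟨ha, hb, hc⟩, habc⟩, ⟨⟨hd, he, hf⟩, hdef⟩⟩ := hq
    refine ⟨![⟨a, ha⟩, ⟨d, hd⟩, ⟨b, hb⟩, ⟨e, he⟩, ⟨c, hc⟩, ⟨f, hf⟩], ?_, ?_⟩
    · simp only [mem_filter, mem_univ, true_and]
      have t0 : ((![⟨a, ha⟩, ⟨d, hd⟩, ⟨b, hb⟩, ⟨e, he⟩, ⟨c, hc⟩, ⟨f, hf⟩] : Fin 6 → Fin N) 0 : ℕ) = a := rfl
      have t1 : ((![⟨a, ha⟩, ⟨d, hd⟩, ⟨b, hb⟩, ⟨e, he⟩, ⟨c, hc⟩, ⟨f, hf⟩] : Fin 6 → Fin N) 1 : ℕ) = d := rfl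
      have t2 : ((![⟨a, ha⟩, ⟨d, hd⟩, ⟨b, hb⟩, ⟨e, he⟩, ⟨c, hc⟩, ⟨f, hf⟩] : Fin 6 → Fin N) 2 : ℕ) = b := rfl
      have t3 : ((![⟨a, ha⟩, ⟨d, hd⟩, ⟨b, hb⟩, ⟨e, he⟩, ⟨c, hc⟩, ⟨f, hf⟩] : Fin 6 → Fin N) 3 : ℕ) = e := rfl
      have t4 : ((![⟨a, ha⟩, ⟨d, hd⟩, ⟨b, hb⟩, ⟨e, he⟩, ⟨c, hc⟩, ⟨f, hf⟩] : Fin 6 → Fin N) 4 : ℕ) = c := rfl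
      have t5 : ((![⟨a, ha⟩, ⟨d, hd⟩, ⟨b, hb⟩, ⟨e, he⟩, ⟨c, hc⟩, ⟨f, hf⟩] : Fin 6 → Fin N) 5 : ℕ) = f := rfl
      constructor
      · rw [hQ]
        rw [t0, t1, t2, t3, t4, t5]
        exact ⟨by omega, by omega⟩
      · rw [t0, t2, t4]
        omega
    · rfl


private lemma red5 (N : ℕ) (ρ : PartN 7)
    (h : ρ.parts = {({0, 4} : Finset (Fin 7)), {2, 6}, {1, 3, 5}}) :
    Svol 7 ρ N = ∑ v ∈ range N, P3c N v * P3c N v := by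
  have hQ : ∀ i : Fin 7 → Fin N,
      (∀ W ∈ ρ.parts, ∑ k ∈ W, ((i (cyc k) : ℕ)) = ∑ k ∈ W, ((i k : ℕ)))
      ↔ ((i 6 : ℕ) + (i 3 : ℕ) = (i 0 : ℕ) + (i 4 : ℕ)
        ∧ (i 1 : ℕ) + (i 5 : ℕ) = (i 2 : ℕ) + (i 6 : ℕ)
        ∧ (i 0 : ℕ) + ((i 2 : ℕ) + (i 4 : ℕ)) = (i 1 : ℕ) + ((i 3 : ℕ) + (i 5 : ℕ))) := by
    intro i
    rw [h]
    simp only [Finset.mem_insert, Finset.mem_singleton, forall_eq_or_imp, forall_eq]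
    rw [Finset.sum_pair (by decide : (0:Fin 7) ≠ 4), Finset.sum_pair (by decide : (0:Fin 7) ≠ 4),
      Finset.sum_pair (by decide : (2:Fin 7) ≠ 6), Finset.sum_pair (by decide : (2:Fin 7) ≠ 6),
      Finset.sum_insert (by decide : (1:Fin 7) ∉ ({3,5} : Finset (Fin 7))),
      Finset.sum_insert (by decide : (1:Fin 7) ∉ ({3,5} : Finset (Fin 7))),
      Finset.sum_pair (by decide : (3:Fin 7) ≠ 5), Finset.sum_pair (by decide : (3:Fin 7) ≠ 5),
      show cyc (0:Fin 7) = 6 by decide, show cyc (4:Fin 7) = 3 by decide,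
      show cyc (2:Fin 7) = 1 by decide, show cyc (6:Fin 7) = 5 by decide,
      show cyc (1:Fin 7) = 0 by decide, show cyc (3:Fin 7) = 2 by decide,
      show cyc (5:Fin 7) = 4 by decide]
  rw [Svol, Nat.card_eq_fintype_card, Fintype.card_subtype]
  rw [Finset.card_eq_sum_card_fiberwise
    (f := fun i : Fin 7 → Fin N => (i 6 : ℕ)) (t := range N)
    (fun x _ => mem_range.mpr (x 6).isLt)]
  refine Finset.sum_congr rfl fun v hv => ?_
  simp only [mem_range] at hv
  rw [show P3c N v * P3c N v
    = (((range N ×ˢ range N ×ˢ range N).filter fun p => p.1 + p.2.1 = p.2.2 + v) ×ˢ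
       ((range N ×ˢ range N ×ˢ range N).filter fun p => p.1 + p.2.1 = p.2.2 + v)).card
    by rw [Finset.card_product]; rfl]
  apply Finset.card_bij (i := fun i _ =>
    (((i 0 : ℕ), (i 4 : ℕ), (i 3 : ℕ)), ((i 1 : ℕ), (i 5 : ℕ), (i 2 : ℕ))))
  · intro i hi
    simp only [mem_filter, mem_univ, true_and] at hi
    obtain ⟨hQ', h0⟩ := hi
    rw [hQ i] at hQ'
    simp only [mem_product, mem_filter, mem_range]
    have := (i 0).isLt; have := (i 1).isLt; have := (i 2).isLt
    have := (i 3).isLt; have := (i 4).isLt; have := (i 5).isLt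
    refine ⟨⟨⟨by omega, by omega, by omega⟩, by omega⟩,
      ⟨⟨by omega, by omega, by omega⟩, by omega⟩⟩
  · intro i hi j hj hij
    simp only [mem_filter, mem_univ, true_and] at hi hj
    simp only [Prod.mk.injEq] at hij
    have e0 : i 0 = j 0 := Fin.ext (by omega)
    have e1 : i 1 = j 1 := Fin.ext (by omega)
    have e2 : i 2 = j 2 := Fin.ext (by omega)
    have e3 : i 3 = j 3 := Fin.ext (by omega)
    have e4 : i 4 = j 4 := Fin.ext (by omega)
    have e5 : i 5 = j 5 := Fin.ext (by omega)
    have e6 : i 6 = j 6 := Fin.ext (by omega)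
    funext k
    fin_cases k
    · exact e0
    · exact e1
    · exact e2
    · exact e3
    · exact e4
    · exact e5
    · exact e6
  · rintro ⟨⟨a, b, c⟩, ⟨d, e, f⟩⟩ hq
    simp only [mem_product, mem_filter, mem_range] at hq
    obtain ⟨⟨⟨ha, hb, hc⟩, habc⟩, ⟨⟨hd, he, hf⟩, hdef⟩⟩ := hq
    refine ⟨![⟨a, ha⟩, ⟨d, hd⟩, ⟨f, hf⟩, ⟨c, hc⟩, ⟨b, hb⟩, ⟨e, he⟩, ⟨v, hv⟩], ?_, ?_⟩
    · simp only [mem_filter, mem_univ, true_and]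
      have t0 : ((![⟨a, ha⟩, ⟨d, hd⟩, ⟨f, hf⟩, ⟨c, hc⟩, ⟨b, hb⟩, ⟨e, he⟩, ⟨v, hv⟩] : Fin 7 → Fin N) 0 : ℕ) = a := rfl
      have t1 : ((![⟨a, ha⟩, ⟨d, hd⟩, ⟨f, hf⟩, ⟨c, hc⟩, ⟨b, hb⟩, ⟨e, he⟩, ⟨v, hv⟩] : Fin 7 → Fin N) 1 : ℕ) = d := rfl
      have t2 : ((![⟨a, ha⟩, ⟨d, hd⟩, ⟨f, hf⟩, ⟨c, hc⟩, ⟨b, hb⟩, ⟨e, he⟩, ⟨v, hv⟩] : Fin 7 → Fin N) 2 : ℕ) = f := rfl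
      have t3 : ((![⟨a, ha⟩, ⟨d, hd⟩, ⟨f, hf⟩, ⟨c, hc⟩, ⟨b, hb⟩, ⟨e, he⟩, ⟨v, hv⟩] : Fin 7 → Fin N) 3 : ℕ) = c := rfl
      have t4 : ((![⟨a, ha⟩, ⟨d, hd⟩, ⟨f, hf⟩, ⟨c, hc⟩, ⟨b, hb⟩, ⟨e, he⟩, ⟨v, hv⟩] : Fin 7 → Fin N) 4 : ℕ) = b := rfl
      have t5 : ((![⟨a, ha⟩, ⟨d, hd⟩, ⟨f, hf⟩, ⟨c, hc⟩, ⟨b, hb⟩, ⟨e, he⟩, ⟨v, hv⟩] : Fin 7 → Fin N) 5 : ℕ) = e := rfl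
      have t6 : ((![⟨a, ha⟩, ⟨d, hd⟩, ⟨f, hf⟩, ⟨c, hc⟩, ⟨b, hb⟩, ⟨e, he⟩, ⟨v, hv⟩] : Fin 7 → Fin N) 6 : ℕ) = v := rfl
      constructor
      · rw [hQ]
        rw [t0, t1, t2, t3, t4, t5, t6]
        exact ⟨by omega, by omega, by omega⟩
      · rw [t6]
    · rfl


private lemma red6 (N : ℕ) (ρ : PartN 7)
    (h : ρ.parts = {({0, 5} : Finset (Fin 7)), {1, 3}, {2, 4, 6}}) :
    Svol 7 ρ N = ∑ v ∈ range N, P3c N v * P3c N v := by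
  have hQ : ∀ i : Fin 7 → Fin N,
      (∀ W ∈ ρ.parts, ∑ k ∈ W, ((i (cyc k) : ℕ)) = ∑ k ∈ W, ((i k : ℕ)))
      ↔ ((i 6 : ℕ) + (i 4 : ℕ) = (i 0 : ℕ) + (i 5 : ℕ)
        ∧ (i 0 : ℕ) + (i 2 : ℕ) = (i 1 : ℕ) + (i 3 : ℕ)
        ∧ (i 1 : ℕ) + ((i 3 : ℕ) + (i 5 : ℕ)) = (i 2 : ℕ) + ((i 4 : ℕ) + (i 6 : ℕ))) := by
    intro i
    rw [h]
    simp only [Finset.mem_insert, Finset.mem_singleton, forall_eq_or_imp, forall_eq]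
    rw [Finset.sum_pair (by decide : (0:Fin 7) ≠ 5), Finset.sum_pair (by decide : (0:Fin 7) ≠ 5),
      Finset.sum_pair (by decide : (1:Fin 7) ≠ 3), Finset.sum_pair (by decide : (1:Fin 7) ≠ 3),
      Finset.sum_insert (by decide : (2:Fin 7) ∉ ({4,6} : Finset (Fin 7))),
      Finset.sum_insert (by decide : (2:Fin 7) ∉ ({4,6} : Finset (Fin 7))),
      Finset.sum_pair (by decide : (4:Fin 7) ≠ 6), Finset.sum_pair (by decide : (4:Fin 7) ≠ 6),
      show cyc (0:Fin 7) = 6 by decide, show cyc (5:Fin 7) = 4 by decide,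
      show cyc (1:Fin 7) = 0 by decide, show cyc (3:Fin 7) = 2 by decide,
      show cyc (2:Fin 7) = 1 by decide, show cyc (4:Fin 7) = 3 by decide,
      show cyc (6:Fin 7) = 5 by decide]
  rw [Svol, Nat.card_eq_fintype_card, Fintype.card_subtype]
  rw [Finset.card_eq_sum_card_fiberwise
    (f := fun i : Fin 7 → Fin N => (i 0 : ℕ)) (t := range N)
    (fun x _ => mem_range.mpr (x 0).isLt)]
  refine Finset.sum_congr rfl fun v hv => ?_
  simp only [mem_range] at hv
  rw [show P3c N v * P3c N v
    = (((range N ×ˢ range N ×ˢ range N).filter fun p => p.1 + p.2.1 = p.2.2 + v) ×ˢ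
       ((range N ×ˢ range N ×ˢ range N).filter fun p => p.1 + p.2.1 = p.2.2 + v)).card
    by rw [Finset.card_product]; rfl]
  apply Finset.card_bij (i := fun i _ =>
    (((i 6 : ℕ), (i 4 : ℕ), (i 5 : ℕ)), ((i 1 : ℕ), (i 3 : ℕ), (i 2 : ℕ))))
  · intro i hi
    simp only [mem_filter, mem_univ, true_and] at hi
    obtain ⟨hQ', h0⟩ := hi
    rw [hQ i] at hQ'
    simp only [mem_product, mem_filter, mem_range]
    have := (i 1).isLt; have := (i 2).isLt; have := (i 3).isLt
    have := (i 4).isLt; have := (i 5).isLt; have := (i 6).isLt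
    refine ⟨⟨⟨by omega, by omega, by omega⟩, by omega⟩,
      ⟨⟨by omega, by omega, by omega⟩, by omega⟩⟩
  · intro i hi j hj hij
    simp only [mem_filter, mem_univ, true_and] at hi hj
    simp only [Prod.mk.injEq] at hij
    have e0 : i 0 = j 0 := Fin.ext (by omega)
    have e1 : i 1 = j 1 := Fin.ext (by omega)
    have e2 : i 2 = j 2 := Fin.ext (by omega)
    have e3 : i 3 = j 3 := Fin.ext (by omega)
    have e4 : i 4 = j 4 := Fin.ext (by omega)
    have e5 : i 5 = j 5 := Fin.ext (by omega)
    have e6 : i 6 = j 6 := Fin.ext (by omega)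
    funext k
    fin_cases k
    · exact e0
    · exact e1
    · exact e2
    · exact e3
    · exact e4
    · exact e5
    · exact e6
  · rintro ⟨⟨a, b, c⟩, ⟨d, e, f⟩⟩ hq
    simp only [mem_product, mem_filter, mem_range] at hq
    obtain ⟨⟨⟨ha, hb, hc⟩, habc⟩, ⟨⟨hd, he, hf⟩, hdef⟩⟩ := hq
    refine ⟨![⟨v, hv⟩, ⟨d, hd⟩, ⟨f, hf⟩, ⟨e, he⟩, ⟨b, hb⟩, ⟨c, hc⟩, ⟨a, ha⟩], ?_, ?_⟩
    · simp only [mem_filter, mem_univ, true_and]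
      have t0 : ((![⟨v, hv⟩, ⟨d, hd⟩, ⟨f, hf⟩, ⟨e, he⟩, ⟨b, hb⟩, ⟨c, hc⟩, ⟨a, ha⟩] : Fin 7 → Fin N) 0 : ℕ) = v := rfl
      have t1 : ((![⟨v, hv⟩, ⟨d, hd⟩, ⟨f, hf⟩, ⟨e, he⟩, ⟨b, hb⟩, ⟨c, hc⟩, ⟨a, ha⟩] : Fin 7 → Fin N) 1 : ℕ) = d := rfl
      have t2 : ((![⟨v, hv⟩, ⟨d, hd⟩, ⟨f, hf⟩, ⟨e, he⟩, ⟨b, hb⟩, ⟨c, hc⟩, ⟨a, ha⟩] : Fin 7 → Fin N) 2 : ℕ) = f := rfl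
      have t3 : ((![⟨v, hv⟩, ⟨d, hd⟩, ⟨f, hf⟩, ⟨e, he⟩, ⟨b, hb⟩, ⟨c, hc⟩, ⟨a, ha⟩] : Fin 7 → Fin N) 3 : ℕ) = e := rfl
      have t4 : ((![⟨v, hv⟩, ⟨d, hd⟩, ⟨f, hf⟩, ⟨e, he⟩, ⟨b, hb⟩, ⟨c, hc⟩, ⟨a, ha⟩] : Fin 7 → Fin N) 4 : ℕ) = b := rfl
      have t5 : ((![⟨v, hv⟩, ⟨d, hd⟩, ⟨f, hf⟩, ⟨e, he⟩, ⟨b, hb⟩, ⟨c, hc⟩, ⟨a, ha⟩] : Fin 7 → Fin N) 5 : ℕ) = c := rfl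
      have t6 : ((![⟨v, hv⟩, ⟨d, hd⟩, ⟨f, hf⟩, ⟨e, he⟩, ⟨b, hb⟩, ⟨c, hc⟩, ⟨a, ha⟩] : Fin 7 → Fin N) 6 : ℕ) = a := rfl
      constructor
      · rw [hQ]
        rw [t0, t1, t2, t3, t4, t5, t6]
        exact ⟨by omega, by omega, by omega⟩
      · rw [t0]
    · rfl

end Reds

section Lim
open Finset Filter

private lemma lim_helper (c0 c2 c4 : ℝ) (f : ℕ → ℝ)
    (hf : ∀ N : ℕ, 1 ≤ N → f N = c0 + c2 * (1/(N:ℝ))^2 + c4 * (1/(N:ℝ))^4) :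
    Tendsto f atTop (nhds c0) := by
  have base : Tendsto (fun N : ℕ => 1/(N:ℝ)) atTop (nhds 0) :=
    tendsto_one_div_atTop_nhds_zero_nat
  have T : Tendsto (fun N : ℕ => c0 + c2*(1/(N:ℝ))^2 + c4*(1/(N:ℝ))^4) atTop
      (nhds (c0 + c2*0^2 + c4*0^4)) :=
    (tendsto_const_nhds.add ((base.pow 2).const_mul c2)).add ((base.pow 4).const_mul c4)
  have hval : c0 + c2*0^2 + c4*0^4 = c0 := by ring
  rw [hval] at T
  refine Tendsto.congr' ?_ T
  filter_upwards [eventually_ge_atTop 1] with N hN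
  rw [hf N hN]

end Lim


section Vals
open Finset

private lemma caseval1 (N : ℕ) :
    ((∑ v ∈ range N, P3c N v : ℕ) : ℝ) = (2*(N:ℝ)^3 + N)/3 := by
  rw [Nat.cast_sum, sumE1]

private lemma caseval2 (N : ℕ) :
    ((∑ s ∈ range (2*N-1), P2c N s * (P2c N s * P2c N s) : ℕ) : ℝ)
      = ((N:ℝ)^4 + (N:ℝ)^2)/2 := by
  rw [Nat.cast_sum, ← sumE2]
  exact Finset.sum_congr rfl fun s _ => by push_cast; ring

private lemma caseval3 (N : ℕ) :
    ((∑ v ∈ range N, P3c N v * P3c N v : ℕ) : ℝ)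
      = 9/20*(N:ℝ)^5 + 5/12*(N:ℝ)^3 + 2/15*(N:ℝ) := by
  rw [Nat.cast_sum, ← sumE3]
  exact Finset.sum_congr rfl fun v _ => by push_cast; ring

private lemma caseval4 (N : ℕ) (hN : 1 ≤ N) :
    ((∑ s ∈ range (3*N-2), T3c N s * T3c N s : ℕ) : ℝ)
      = 11/20*(N:ℝ)^5 + 1/4*(N:ℝ)^3 + 1/5*(N:ℝ) := by
  rw [Nat.cast_sum, ← sumE4 N hN]
  exact Finset.sum_congr rfl fun s _ => by push_cast; ring

end Vals

/-- Proposition 3 of the paper. Values of `K_{ρ,u}` for six specific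
partitions (elements `1,…,n` of the paper are represented as `0,…,n-1 : Fin n`). -/
theorem statement_2 :
    (∀ ρ : PartN 4, ρ.parts = {({0, 2} : Finset (Fin 4)), {1, 3}} →
      Filter.Tendsto (fun N => (Svol 4 ρ N : ℝ) / (N : ℝ) ^ (4 + 1 - ρ.parts.card))
        Filter.atTop (nhds (2 / 3))) ∧
    (∀ ρ : PartN 6, ρ.parts = {({0, 3} : Finset (Fin 6)), {1, 4}, {2, 5}} →
      Filter.Tendsto (fun N => (Svol 6 ρ N : ℝ) / (N : ℝ) ^ (6 + 1 - ρ.parts.card))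
        Filter.atTop (nhds (1 / 2))) ∧
    (∀ ρ : PartN 6, ρ.parts = {({0, 3} : Finset (Fin 6)), {1, 5}, {2, 4}} →
      Filter.Tendsto (fun N => (Svol 6 ρ N : ℝ) / (N : ℝ) ^ (6 + 1 - ρ.parts.card))
        Filter.atTop (nhds (1 / 2))) ∧
    (∀ ρ : PartN 6, ρ.parts = {({0, 2, 4} : Finset (Fin 6)), {1, 3, 5}} →
      Filter.Tendsto (fun N => (Svol 6 ρ N : ℝ) / (N : ℝ) ^ (6 + 1 - ρ.parts.card))
        Filter.atTop (nhds (11 / 20))) ∧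
    (∀ ρ : PartN 7, ρ.parts = {({0, 4} : Finset (Fin 7)), {2, 6}, {1, 3, 5}} →
      Filter.Tendsto (fun N => (Svol 7 ρ N : ℝ) / (N : ℝ) ^ (7 + 1 - ρ.parts.card))
        Filter.atTop (nhds (9 / 20))) ∧
    (∀ ρ : PartN 7, ρ.parts = {({0, 5} : Finset (Fin 7)), {1, 3}, {2, 4, 6}} →
      Filter.Tendsto (fun N => (Svol 7 ρ N : ℝ) / (N : ℝ) ^ (7 + 1 - ρ.parts.card))
        Filter.atTop (nhds (9 / 20))) := by
  refine ⟨?_, ?_, ?_, ?_, ?_, ?_⟩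
  · intro ρ h
    have hcard : ρ.parts.card = 2 := by rw [h]; decide
    simp only [hcard]
    apply lim_helper (2/3) (1/3) 0
    intro N hN
    have hN0 : (N:ℝ) ≠ 0 := Nat.cast_ne_zero.mpr (by omega)
    rw [red1 N ρ h, caseval1 N, show 4+1-2 = 3 from rfl]
    field_simp
    ring
  · intro ρ h
    have hcard : ρ.parts.card = 3 := by rw [h]; decide
    simp only [hcard]
    apply lim_helper (1/2) (1/2) 0
    intro N hN
    have hN0 : (N:ℝ) ≠ 0 := Nat.cast_ne_zero.mpr (by omega)
    rw [red2 N ρ h, caseval2 N, show 6+1-3 = 4 from rfl]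
    field_simp
    ring
  · intro ρ h
    have hcard : ρ.parts.card = 3 := by rw [h]; decide
    simp only [hcard]
    apply lim_helper (1/2) (1/2) 0
    intro N hN
    have hN0 : (N:ℝ) ≠ 0 := Nat.cast_ne_zero.mpr (by omega)
    rw [red3 N ρ h, caseval2 N, show 6+1-3 = 4 from rfl]
    field_simp
    ring
  · intro ρ h
    have hcard : ρ.parts.card = 2 := by rw [h]; decide
    simp only [hcard]
    apply lim_helper (11/20) (1/4) (1/5)
    intro N hN
    have hN0 : (N:ℝ) ≠ 0 := Nat.cast_ne_zero.mpr (by omega)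
    rw [red4 N ρ h, caseval4 N hN, show 6+1-2 = 5 from rfl]
    field_simp
  · intro ρ h
    have hcard : ρ.parts.card = 3 := by rw [h]; decide
    simp only [hcard]
    apply lim_helper (9/20) (5/12) (2/15)
    intro N hN
    have hN0 : (N:ℝ) ≠ 0 := Nat.cast_ne_zero.mpr (by omega)
    rw [red5 N ρ h, caseval3 N, show 7+1-3 = 5 from rfl]
    field_simp
  · intro ρ h
    have hcard : ρ.parts.card = 3 := by rw [h]; decide
    simp only [hcard]
    apply lim_helper (9/20) (5/12) (2/15)
    intro N hN
    have hN0 : (N:ℝ) ≠ 0 := Nat.cast_ne_zero.mpr (by omega)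
    rw [red6 N ρ h, caseval3 N, show 7+1-3 = 5 from rfl]
    field_simp
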